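/- Under Assumption A, for every r ∈ (0,1] and every x = (x₁,x₂) ∈ [0,∞)², with η₁, η₂ i.i.d. copies of η, one has E[(η₂²)^r · ψ(ψ(x₁,x₂)·η₁², x₁)^r] ≤ μ_{2r}·ω^r + μ_{2r}·α^r·ψ(x₁,x₂)^r · E[(η²)^r · 1[η² > k·x₁/ψ(x₁,x₂)]], where μ_{2r} = E[(η²)^r]. -/

import Mathlib

open MeasureTheory ProbabilityTheory Set Filter
open scoped ENNReal

lemma real_rpow_add_le_add_rpow {a b r : ℝ} (ha : 0 ≤ a) (hb : 0 ≤ b)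
    (hr0 : 0 ≤ r) (hr1 : r ≤ 1) : (a + b) ^ r ≤ a ^ r + b ^ r := by
  have h := NNReal.rpow_add_le_add_rpow a.toNNReal b.toNNReal hr0 hr1
  have h' := (NNReal.coe_le_coe).2 h
  simp only [NNReal.coe_rpow, NNReal.coe_add, Real.coe_toNNReal a ha,
    Real.coe_toNNReal b hb] at h'
  exact h'

lemma rpow_le_one_add_self {x r : ℝ} (hx : 0 ≤ x) (hr0 : 0 < r) (hr1 : r ≤ 1) :
    x ^ r ≤ 1 + x := by
  rcases le_total x 1 with h | h
  · have := Real.rpow_le_one hx h hr0.le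
    linarith
  · have : x ^ r ≤ x ^ (1 : ℝ) := Real.rpow_le_rpow_of_exponent_le h hr1
    rw [Real.rpow_one] at this
    linarith [hx]

/-- Under Assumption A, for `r ∈ (0,1]` and `x ∈ [0,∞)²`,
`E[(η₂²)^r ψ(ψ(x) η₁², x₁)^r] ≤ μ_{2r} ω^r + μ_{2r} α^r ψ(x)^r E[(η²)^r 1_{η² > k x₁/ψ(x)}]`. -/
theorem stmt11
    {Ω' : Type*} [MeasurableSpace Ω'] (P : Measure Ω') [IsProbabilityMeasure P]
    (ω α k : ℝ) (hω : 0 < ω) (hα : 0 ≤ α) (hk : 0 ≤ k)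
    (ψ : ℝ → ℝ → ℝ)
    (hψ : ∀ x₁ x₂, ψ x₁ x₂ = ω + α * x₁ * (if k * x₂ < x₁ then 1 else 0))
    (η₁ η₂ : Ω' → ℝ) (hη₁ : Measurable η₁) (hη₂ : Measurable η₂)
    (hindep : IndepFun η₁ η₂ P)
    (f : ℝ → ℝ≥0∞) (hf : Measurable f) (hfpos : ∀ x, 0 ≤ x → 0 < f x)
    (hd₁ : Measure.map (fun z => (η₁ z) ^ 2) P = (volume.restrict (Ici (0 : ℝ))).withDensity f)
    (hd₂ : Measure.map (fun z => (η₂ z) ^ 2) P = (volume.restrict (Ici (0 : ℝ))).withDensity f)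
    (hint₁ : Integrable η₁ P) (hint₂ : Integrable η₂ P)
    (hm₁ : ∫ z, η₁ z ∂P = 0) (hm₂ : ∫ z, η₂ z ∂P = 0)
    (hv₁ : ∫ z, (η₁ z) ^ 2 ∂P = 1) (hv₂ : ∫ z, (η₂ z) ^ 2 ∂P = 1)
    (r : ℝ) (hr : r ∈ Ioc (0 : ℝ) 1) :
    ∀ x₁ x₂ : ℝ, 0 ≤ x₁ → 0 ≤ x₂ →
      ∫ z, ((η₂ z) ^ 2) ^ r * (ψ (ψ x₁ x₂ * (η₁ z) ^ 2) x₁) ^ r ∂P ≤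
        (∫ z, ((η₁ z) ^ 2) ^ r ∂P) * ω ^ r +
        (∫ z, ((η₁ z) ^ 2) ^ r ∂P) * α ^ r * (ψ x₁ x₂) ^ r *
          ∫ z, ((η₁ z) ^ 2) ^ r *
            (if k * x₁ / ψ x₁ x₂ < (η₁ z) ^ 2 then (1 : ℝ) else 0) ∂P := by
  obtain ⟨hr0, hr1⟩ := hr
  intro x₁ x₂ hx₁ hx₂
  -- positivity of ψ
  have hψpos : ∀ a b : ℝ, 0 ≤ a → 0 < ψ a b := by
    intro a b ha
    rw [hψ]
    have h1 : 0 ≤ α * a * (if k * b < a then 1 else 0) := by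
      split_ifs with h
      · simp; positivity
      · simp
    linarith
  have hw : 0 < ψ x₁ x₂ := hψpos x₁ x₂ hx₁
  set w := ψ x₁ x₂ with hwdef
  set c := k * x₁ / w with hcdef
  -- integrability of η_i²
  have hI1 : Integrable (fun z => (η₁ z) ^ 2) P := by
    by_contra h; rw [integral_undef h] at hv₁; exact one_ne_zero hv₁.symm
  have hI2 : Integrable (fun z => (η₂ z) ^ 2) P := by
    by_contra h; rw [integral_undef h] at hv₂; exact one_ne_zero hv₂.symm
  -- measurable helpers
  have hrm : Measurable fun t : ℝ => t ^ r := (Real.continuous_rpow_const hr0.le).measurable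
  have hm1 : Measurable fun z => ((η₁ z) ^ 2) ^ r := hrm.comp (hη₁.pow_const 2)
  have hm2 : Measurable fun z => ((η₂ z) ^ 2) ^ r := hrm.comp (hη₂.pow_const 2)
  have hindm : Measurable fun z => (if c < (η₁ z) ^ 2 then (1 : ℝ) else 0) :=
    Measurable.ite (measurableSet_lt measurable_const (hη₁.pow_const 2))
      measurable_const measurable_const
  have hmB : Measurable fun z => ((η₁ z) ^ 2) ^ r * (if c < (η₁ z) ^ 2 then (1 : ℝ) else 0) :=
    hm1.mul hindm
  -- integrability of (η_i²)^r
  have hIr1 : Integrable (fun z => ((η₁ z) ^ 2) ^ r) P := by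
    refine ((integrable_const (1 : ℝ)).add hI1).mono hm1.aestronglyMeasurable
      (ae_of_all _ fun z => ?_)
    have h0 : (0:ℝ) ≤ (η₁ z) ^ 2 := sq_nonneg _
    have hb := rpow_le_one_add_self h0 hr0 hr1
    simp only [Real.norm_eq_abs, Pi.add_apply, abs_of_nonneg (Real.rpow_nonneg h0 r),
      abs_of_nonneg (by positivity : (0:ℝ) ≤ 1 + (η₁ z) ^ 2)]
    exact hb
  have hIr2 : Integrable (fun z => ((η₂ z) ^ 2) ^ r) P := by
    refine ((integrable_const (1 : ℝ)).add hI2).mono hm2.aestronglyMeasurable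
      (ae_of_all _ fun z => ?_)
    have h0 : (0:ℝ) ≤ (η₂ z) ^ 2 := sq_nonneg _
    have hb := rpow_le_one_add_self h0 hr0 hr1
    simp only [Real.norm_eq_abs, Pi.add_apply, abs_of_nonneg (Real.rpow_nonneg h0 r),
      abs_of_nonneg (by positivity : (0:ℝ) ≤ 1 + (η₂ z) ^ 2)]
    exact hb
  have hIB : Integrable
      (fun z => ((η₁ z) ^ 2) ^ r * (if c < (η₁ z) ^ 2 then (1 : ℝ) else 0)) P := by
    refine hIr1.mono hmB.aestronglyMeasurable (ae_of_all _ fun z => ?_)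
    have h0 : (0:ℝ) ≤ ((η₁ z) ^ 2) ^ r := Real.rpow_nonneg (sq_nonneg _) r
    rw [Real.norm_eq_abs, Real.norm_eq_abs, abs_of_nonneg h0]
    split_ifs with h
    · rw [mul_one, abs_of_nonneg h0]
    · rw [mul_zero, abs_of_nonneg (le_refl 0 |>.trans (le_refl 0))]
      · exact h0
  -- independence of the transformed variables
  have hABindep : IndepFun (fun z => ((η₂ z) ^ 2) ^ r)
      (fun z => ((η₁ z) ^ 2) ^ r * (if c < (η₁ z) ^ 2 then (1 : ℝ) else 0)) P := by
    have hφ : Measurable fun t : ℝ => (t ^ 2) ^ r := hrm.comp (measurable_id.pow_const 2)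
    have hχ : Measurable fun t : ℝ => (t ^ 2) ^ r * (if c < t ^ 2 then (1 : ℝ) else 0) :=
      hφ.mul (Measurable.ite (measurableSet_lt measurable_const
        (measurable_id.pow_const 2)) measurable_const measurable_const)
    exact hindep.symm.comp hφ hχ
  have hIAB : Integrable ((fun z => ((η₂ z) ^ 2) ^ r) *
      (fun z => ((η₁ z) ^ 2) ^ r * (if c < (η₁ z) ^ 2 then (1 : ℝ) else 0))) P :=
    hABindep.integrable_mul hIr2 hIB
  -- pointwise bound
  have hpt : ∀ z, ((η₂ z) ^ 2) ^ r * (ψ (w * (η₁ z) ^ 2) x₁) ^ r ≤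
      ((η₂ z) ^ 2) ^ r * ω ^ r + α ^ r * w ^ r *
        (((η₂ z) ^ 2) ^ r * (((η₁ z) ^ 2) ^ r *
          (if c < (η₁ z) ^ 2 then (1 : ℝ) else 0))) := by
    intro z
    have hu0 : (0:ℝ) ≤ (η₁ z) ^ 2 := sq_nonneg _
    have hs0 : (0:ℝ) ≤ ((η₂ z) ^ 2) ^ r := Real.rpow_nonneg (sq_nonneg _) r
    have hiff : k * x₁ < w * (η₁ z) ^ 2 ↔ c < (η₁ z) ^ 2 := by
      rw [hcdef, div_lt_iff₀ hw, mul_comm ((η₁ z) ^ 2) w]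
    have key : (ψ (w * (η₁ z) ^ 2) x₁) ^ r ≤
        ω ^ r + α ^ r * w ^ r * (((η₁ z) ^ 2) ^ r *
          (if c < (η₁ z) ^ 2 then (1 : ℝ) else 0)) := by
      rw [hψ]
      by_cases hcnd : k * x₁ < w * (η₁ z) ^ 2
      · rw [if_pos hcnd, if_pos (hiff.mp hcnd), mul_one, mul_one]
        have h1 : (ω + α * (w * (η₁ z) ^ 2)) ^ r ≤ ω ^ r + (α * (w * (η₁ z) ^ 2)) ^ r :=
          real_rpow_add_le_add_rpow hω.le (by positivity) hr0.le hr1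
        have h2 : (α * (w * (η₁ z) ^ 2)) ^ r = α ^ r * w ^ r * ((η₁ z) ^ 2) ^ r := by
          rw [Real.mul_rpow hα (by positivity), Real.mul_rpow hw.le hu0, mul_assoc]
        linarith [h1, h2.le, h2.ge]
      · rw [if_neg hcnd, if_neg (fun h => hcnd (hiff.mpr h))]
        simp
    calc ((η₂ z) ^ 2) ^ r * (ψ (w * (η₁ z) ^ 2) x₁) ^ r
        ≤ ((η₂ z) ^ 2) ^ r * (ω ^ r + α ^ r * w ^ r * (((η₁ z) ^ 2) ^ r *
            (if c < (η₁ z) ^ 2 then (1 : ℝ) else 0))) :=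
          mul_le_mul_of_nonneg_left key hs0
      _ = ((η₂ z) ^ 2) ^ r * ω ^ r + α ^ r * w ^ r *
            (((η₂ z) ^ 2) ^ r * (((η₁ z) ^ 2) ^ r *
              (if c < (η₁ z) ^ 2 then (1 : ℝ) else 0))) := by ring
  -- integrability of the RHS of the pointwise bound
  have hIRHS : Integrable (fun z => ((η₂ z) ^ 2) ^ r * ω ^ r + α ^ r * w ^ r *
      (((η₂ z) ^ 2) ^ r * (((η₁ z) ^ 2) ^ r *
        (if c < (η₁ z) ^ 2 then (1 : ℝ) else 0)))) P := by
    refine (hIr2.mul_const _).add ?_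
    have := hIAB.const_mul (α ^ r * w ^ r)
    simpa only [Pi.mul_apply, mul_assoc] using this
  -- main integral inequality
  have step1 : ∫ z, ((η₂ z) ^ 2) ^ r * (ψ (w * (η₁ z) ^ 2) x₁) ^ r ∂P ≤
      ∫ z, (((η₂ z) ^ 2) ^ r * ω ^ r + α ^ r * w ^ r *
        (((η₂ z) ^ 2) ^ r * (((η₁ z) ^ 2) ^ r *
          (if c < (η₁ z) ^ 2 then (1 : ℝ) else 0)))) ∂P := by
    refine integral_mono_of_nonneg (ae_of_all _ fun z => ?_) hIRHS (ae_of_all _ hpt)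
    have h1 : (0:ℝ) ≤ ψ (w * (η₁ z) ^ 2) x₁ := (hψpos _ _ (by positivity)).le
    positivity
  -- compute the RHS integral
  have step2 : ∫ z, (((η₂ z) ^ 2) ^ r * ω ^ r + α ^ r * w ^ r *
      (((η₂ z) ^ 2) ^ r * (((η₁ z) ^ 2) ^ r *
        (if c < (η₁ z) ^ 2 then (1 : ℝ) else 0)))) ∂P =
      (∫ z, ((η₂ z) ^ 2) ^ r ∂P) * ω ^ r + α ^ r * w ^ r *
        ((∫ z, ((η₂ z) ^ 2) ^ r ∂P) *
          ∫ z, ((η₁ z) ^ 2) ^ r * (if c < (η₁ z) ^ 2 then (1 : ℝ) else 0) ∂P) := by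
    rw [integral_add (hIr2.mul_const _) (by
      have := hIAB.const_mul (α ^ r * w ^ r)
      simpa only [Pi.mul_apply, mul_assoc] using this)]
    rw [integral_mul_const, integral_const_mul]
    congr 1
    congr 1
    have := IndepFun.integral_mul_eq_mul_integral hABindep hIr2.aestronglyMeasurable hIB.aestronglyMeasurable
    simpa only [Pi.mul_apply] using this
  -- equality of distributions gives equality of moments
  have hmapeq : Measure.map (fun z => (η₂ z) ^ 2) P = Measure.map (fun z => (η₁ z) ^ 2) P :=
    hd₂.trans hd₁.symm
  have hmom : ∫ z, ((η₂ z) ^ 2) ^ r ∂P = ∫ z, ((η₁ z) ^ 2) ^ r ∂P := by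
    have hg : Measurable fun t : ℝ => t ^ r := hrm
    rw [← integral_map (hη₂.pow_const 2).aemeasurable hg.aestronglyMeasurable,
      ← integral_map (hη₁.pow_const 2).aemeasurable hg.aestronglyMeasurable, hmapeq]
  calc ∫ z, ((η₂ z) ^ 2) ^ r * (ψ (w * (η₁ z) ^ 2) x₁) ^ r ∂P
      ≤ (∫ z, ((η₂ z) ^ 2) ^ r ∂P) * ω ^ r + α ^ r * w ^ r *
        ((∫ z, ((η₂ z) ^ 2) ^ r ∂P) *
          ∫ z, ((η₁ z) ^ 2) ^ r * (if c < (η₁ z) ^ 2 then (1 : ℝ) else 0) ∂P) := by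
        rw [← step2]; exact step1
    _ = (∫ z, ((η₁ z) ^ 2) ^ r ∂P) * ω ^ r +
        (∫ z, ((η₁ z) ^ 2) ^ r ∂P) * α ^ r * w ^ r *
          ∫ z, ((η₁ z) ^ 2) ^ r * (if c < (η₁ z) ^ 2 then (1 : ℝ) else 0) ∂P := by
        rw [hmom]; ring
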